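/- Let H be the supercommutative bialgebra over R with basis 1, d where d² = 0, Δ(d) = d⊗1 + 1⊗d, and d of odd degree. For any supercommutative R-algebra M, the universal measuring algebra H(M) (in the supercommutative setting) is isomorphic to the algebra of Kähler differential forms Ω*(M) over M, with d acting as the de Rham differential. -/

import Mathlib

open TensorProduct

/-- Let `H = R⟨1, d⟩` be the supercommutative bialgebra with `d² = 0`,
`Δ(d) = d⊗1 + 1⊗d`, `d` odd.  For a (super)commutative `R`-algebra `M`, the
universal measuring algebra `H(M)` is the algebra `Ω*(M)` of differential forms,
i.e. the exterior algebra over `M` on the Kähler differentials `Ω¹_{M/R}`,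
with `d` acting as the de Rham differential: `Ω*(M)` with `m ↦ m` and
`m ↦ dm` is universal among supercommutative algebras `A` equipped with an
algebra map `f : M → A` into the even part and an odd derivation `D' : M → A`. -/
theorem differential_forms_universal (R M : Type) [CommRing R] [CommRing M]
    [Algebra R M] :
    -- the structure map of `Ω*(M)` satisfies the measuring (Leibniz) identity
    (∀ m n : M,
      ExteriorAlgebra.ι M (KaehlerDifferential.D R M (m * n))
        = ExteriorAlgebra.ι M (KaehlerDifferential.D R M m)
            * algebraMap M (ExteriorAlgebra M (Ω[M⁄R])) n
          + algebraMap M (ExteriorAlgebra M (Ω[M⁄R])) m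
            * ExteriorAlgebra.ι M (KaehlerDifferential.D R M n)) ∧
    -- universality of `Ω*(M)` among supercommutative algebras
    (∀ (A : Type) [Ring A] [Algebra R A] (𝒜 : ZMod 2 → AddSubgroup A),
      ∀ [GradedRing 𝒜],
      (∀ (i j : ZMod 2) (a b : A), a ∈ 𝒜 i → b ∈ 𝒜 j →
        a * b = ((-1 : ℤ) ^ (i.val * j.val)) • (b * a)) →
      (∀ a : A, a ∈ 𝒜 1 → a * a = 0) →
      ∀ (f : M →ₐ[R] A), (∀ m : M, f m ∈ 𝒜 0) →
      ∀ (D' : M →ₗ[R] A), (∀ m : M, D' m ∈ 𝒜 1) →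
      (∀ m n : M, D' (m * n) = D' m * f n + f m * D' n) →
      ∃! g : ExteriorAlgebra M (Ω[M⁄R]) →+* A,
        (∀ m : M, g (algebraMap M (ExteriorAlgebra M (Ω[M⁄R])) m) = f m) ∧
        (∀ m : M, g (ExteriorAlgebra.ι M (KaehlerDifferential.D R M m)) = D' m)) := by
  constructor
  · intro m n
    rw [Derivation.leibniz, map_add, map_smul, map_smul, Algebra.smul_def, Algebra.smul_def,
      ← Algebra.commutes n (ExteriorAlgebra.ι M (KaehlerDifferential.D R M m)), add_comm]
  · intro A _ _ 𝒜 _ hcomm hsq f hf0 D' hD1 hleib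
    -- elements of `𝒜 0` are central
    have hcentral : ∀ m : M, ∀ a : A, f m * a = a * f m := by
      intro m a
      induction a using DirectSum.Decomposition.inductionOn 𝒜 with
      | zero => simp
      | homogeneous b =>
          simpa using hcomm 0 _ (f m) b (hf0 m) b.2
      | add x y hx hy => rw [mul_add, add_mul, hx, hy]
    letI : Algebra M A := RingHom.toAlgebra' f.toRingHom hcentral
    have halg : ∀ m : M, algebraMap M A m = f m := fun _ => rfl
    letI : IsScalarTower R M A :=
      IsScalarTower.of_algebraMap_eq fun r => (f.commutes r).symm
    have hsmul : ∀ (m : M) (a : A), m • a = f m * a := fun m a => Algebra.smul_def m a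
    -- `D'` as a derivation into `A`
    have hD1' : D' (1 : M) = 0 := by
      have h := hleib 1 1
      simp only [mul_one, map_one, one_mul] at h
      exact (left_eq_add.mp h)
    let D : Derivation R M A :=
      { toLinearMap := D'
        map_one_eq_zero' := hD1'
        leibniz' := fun m n => by
          rw [hleib, hsmul, hsmul, hcentral n (D' m), add_comm] }
    let δ : Ω[M⁄R] →ₗ[M] A := D.liftKaehlerDifferential
    have hδD : ∀ m : M, δ (KaehlerDifferential.D R M m) = D' m := fun m =>
      D.liftKaehlerDifferential_comp_D m
    -- `δ` lands in odd degree
    have hδ1 : ∀ x : Ω[M⁄R], δ x ∈ 𝒜 1 := by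
      intro x
      have hx : x ∈ Submodule.span M (Set.range (KaehlerDifferential.D R M)) := by
        rw [KaehlerDifferential.span_range_derivation]; trivial
      induction hx using Submodule.span_induction with
      | mem x hx =>
          obtain ⟨m, rfl⟩ := hx
          rw [hδD]; exact hD1 m
      | zero => rw [map_zero]; exact zero_mem _
      | add x y _ _ hx hy => rw [map_add]; exact add_mem hx hy
      | smul m x _ hx =>
          rw [map_smul, hsmul]
          have := SetLike.mul_mem_graded (hf0 m) hx
          rwa [zero_add] at this
    have hδsq : ∀ x : Ω[M⁄R], δ x * δ x = 0 := fun x => hsq (δ x) (hδ1 x)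
    let G : ExteriorAlgebra M (Ω[M⁄R]) →ₐ[M] A := ExteriorAlgebra.lift M ⟨δ, hδsq⟩
    refine ⟨G.toRingHom, ⟨fun m => ?_, fun m => ?_⟩, ?_⟩
    · show G (algebraMap M _ m) = f m
      rw [AlgHom.commutes]; exact halg m
    · show G (ExteriorAlgebra.ι M (KaehlerDifferential.D R M m)) = D' m
      rw [ExteriorAlgebra.lift_ι_apply]; exact hδD m
    · rintro g' ⟨hg1, hg2⟩
      have hGalg : ∀ m : M, G.toRingHom (algebraMap M (ExteriorAlgebra M (Ω[M⁄R])) m) = f m :=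
        fun m => by show G (algebraMap M _ m) = f m; rw [AlgHom.commutes]; exact halg m
      have hι : ∀ x : Ω[M⁄R], g' (ExteriorAlgebra.ι M x) = G.toRingHom (ExteriorAlgebra.ι M x) := by
        intro x
        have hx : x ∈ Submodule.span M (Set.range (KaehlerDifferential.D R M)) := by
          rw [KaehlerDifferential.span_range_derivation]; trivial
        induction hx using Submodule.span_induction with
        | mem x hx =>
            obtain ⟨m, rfl⟩ := hx
            rw [hg2 m]
            show _ = G (ExteriorAlgebra.ι M (KaehlerDifferential.D R M m))
            rw [ExteriorAlgebra.lift_ι_apply, hδD]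
        | zero => simp
        | add x y _ _ hx hy => rw [map_add, map_add, map_add, hx, hy]
        | smul m x _ hx =>
            rw [map_smul, Algebra.smul_def, map_mul, map_mul, hx, hg1 m, hGalg m]
      ext a
      induction a using ExteriorAlgebra.induction with
      | algebraMap m => rw [hg1 m, hGalg m]
      | ι x => exact hι x
      | mul x y hx hy => rw [map_mul, map_mul, hx, hy]
      | add x y hx hy => rw [map_add, map_add, hx, hy]
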